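/- Let k > 1 and let f be a good function of order k and g a nice function of order k with the same parameters m, n (m a positive multiple of k, k ≤ n) and arbitrary non-negative integer offsets x_i. Then f(m, n) ≥ g(m, n). -/

import Mathlib

private lemma step_mono (k N M M' : ℤ) (hk : 0 < k) (hkN : k ≤ N)
    (hle : M' ≤ M) (hd : k ∣ (M - M')) :
    M' - k * ⌈(M' : ℚ) / (N : ℚ)⌉ ≤ M - k * ⌈(M : ℚ) / (N : ℚ)⌉ := by
  obtain ⟨t, ht⟩ := hd
  have ht0 : 0 ≤ t := by nlinarith
  have hN0 : (0 : ℤ) < N := lt_of_lt_of_le hk hkN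
  have hNq : (0 : ℚ) < (N : ℚ) := by exact_mod_cast hN0
  have hsplit : (M : ℚ) / N = (M' : ℚ) / N + ((k * t : ℤ) : ℚ) / N := by
    have hMeq : M = M' + k * t := by linarith
    have : (M : ℚ) = (M' : ℚ) + ((k * t : ℤ) : ℚ) := by exact_mod_cast congrArg (Int.cast : ℤ → ℚ) hMeq
    rw [this, add_div]
  have h2 : ⌈((k * t : ℤ) : ℚ) / N⌉ ≤ t := by
    rw [Int.ceil_le]
    rw [div_le_iff₀ hNq]
    push_cast
    have : (k : ℚ) ≤ N := by exact_mod_cast hkN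
    have ht0q : (0 : ℚ) ≤ (t : ℚ) := by exact_mod_cast ht0
    nlinarith
  have h1 : ⌈(M : ℚ) / N⌉ ≤ ⌈(M' : ℚ) / N⌉ + t := by
    rw [hsplit]
    calc ⌈(M' : ℚ) / N + ((k * t : ℤ) : ℚ) / N⌉
        ≤ ⌈(M' : ℚ) / N⌉ + ⌈((k * t : ℤ) : ℚ) / N⌉ := Int.ceil_add_le _ _
      _ ≤ ⌈(M' : ℚ) / N⌉ + t := by linarith
  nlinarith [mul_le_mul_of_nonneg_left h1 (le_of_lt hk)]

private lemma self_le_mul_ceil (k M : ℤ) (hk : 0 < k) :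
    M ≤ k * ⌈(M : ℚ) / (k : ℚ)⌉ := by
  have hkq : (0 : ℚ) < (k : ℚ) := by exact_mod_cast hk
  have := Int.le_ceil ((M : ℚ) / (k : ℚ))
  have h : (M : ℚ) ≤ (k : ℚ) * ⌈(M : ℚ) / (k : ℚ)⌉ := by
    rw [← div_le_iff₀' hkq] at *; exact this
  exact_mod_cast h

/-- A good function of order `k` dominates any nice function of order `k` with the same
parameters `m`, `n` and arbitrary non-negative offsets. -/
theorem good_ge_nice (k : ℤ) (hk : 1 < k) (f g : ℤ → ℤ → ℤ) (x : ℤ → ℤ)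
    (hfnonneg : ∀ M N, 0 ≤ f M N)
    (hfzero : ∀ M N : ℤ, M ≤ 0 ∨ N ≤ 0 → f M N = 0)
    (hfrec : ∀ M N : ℤ, 0 < M → 0 < N →
      f M N = f (M - k * ⌈(M : ℚ) / (N : ℚ)⌉) (N - 1) + 1)
    (hx : ∀ N, 0 ≤ x N)
    (hgnonneg : ∀ M N, 0 ≤ g M N)
    (hgzero : ∀ M N : ℤ, M ≤ 0 ∨ N ≤ 0 → g M N = 0)
    (hgrec : ∀ M N : ℤ, 0 < M → 0 < N →
      g M N = g (M - k * (⌈(M : ℚ) / (N : ℚ)⌉ + x N)) (N - 1) + 1) :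
    ∀ m n : ℤ, 0 < m → k ∣ m → k ≤ n → g m n ≤ f m n := by
  have hk0 : 0 < k := by linarith
  have key : ∀ n : ℤ, k ≤ n → ∀ M M' : ℤ, k ∣ M → k ∣ M' → M' ≤ M → g M' n ≤ f M n := by
    intro n hn
    refine Int.le_induction (motive := fun n _ => ∀ M M' : ℤ, k ∣ M → k ∣ M' → M' ≤ M → g M' n ≤ f M n) ?_ ?_ n hn
    · intro M M' hM hM' hle
      by_cases hM'0 : M' ≤ 0
      · rw [hgzero M' k (Or.inl hM'0)]; exact hfnonneg M k
      · push_neg at hM'0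
        have hM0 : 0 < M := lt_of_lt_of_le hM'0 hle
        rw [hgrec M' k hM'0 hk0, hfrec M k hM0 hk0]
        have hB : M' - k * (⌈(M' : ℚ) / (k : ℚ)⌉ + x k) ≤ 0 := by
          have h1 := self_le_mul_ceil k M' hk0
          have h2 := mul_nonneg (le_of_lt hk0) (hx k)
          nlinarith
        rw [hgzero _ _ (Or.inl hB)]
        linarith [hfnonneg (M - k * ⌈(M : ℚ) / (k : ℚ)⌉) (k - 1)]
    · intro n hn ih M M' hM hM' hle
      by_cases hM'0 : M' ≤ 0
      · rw [hgzero M' (n + 1) (Or.inl hM'0)]; exact hfnonneg M (n + 1)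
      · push_neg at hM'0
        have hM0 : 0 < M := lt_of_lt_of_le hM'0 hle
        have hn0 : 0 < n + 1 := by linarith
        rw [hgrec M' (n + 1) hM'0 hn0, hfrec M (n + 1) hM0 hn0]
        have hstep := step_mono k (n + 1) M M' hk0 (by linarith) hle
          ((dvd_sub_right hM).mpr hM')
        have hBA : M' - k * (⌈(M' : ℚ) / ((n + 1 : ℤ) : ℚ)⌉ + x (n + 1)) ≤
            M - k * ⌈(M : ℚ) / ((n + 1 : ℤ) : ℚ)⌉ := by
          have h2 := mul_nonneg (le_of_lt hk0) (hx (n + 1))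
          nlinarith
        have dA : k ∣ M - k * ⌈(M : ℚ) / ((n + 1 : ℤ) : ℚ)⌉ :=
          dvd_sub hM (dvd_mul_right _ _)
        have dB : k ∣ M' - k * (⌈(M' : ℚ) / ((n + 1 : ℤ) : ℚ)⌉ + x (n + 1)) :=
          dvd_sub hM' (dvd_mul_right _ _)
        have h := ih _ _ dA dB hBA
        have hc : ((n + 1 : ℤ) : ℚ) = (n : ℚ) + 1 := by push_cast; ring
        simp only [add_sub_cancel_right]
        linarith
  intro m n hm hdvd hn
  exact key n hn m m hdvd hdvd le_rfl
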